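/- Let (n,p) be a limit solution with initial datum n⁰. Then for every t > 0: (i) Δp(t) + G(p(t)) ≥ 0 in D'(ℝ^N), i.e. for every nonnegative φ ∈ C_c^∞(ℝ^N), ∫_{ℝ^N} (p(x,t) Δφ(x) + G(p(x,t)) φ(x)) dx ≥ 0; (ii) Δp(t) + G(p(t)) = 0 in D'(Int Ω(t)), i.e. for every φ ∈ C_c^∞(ℝ^N) whose support is contained in the interior of Ω(t) = {x : p(x,t) > 0}, ∫_{ℝ^N} (p(x,t) Δφ(x) + G(p(x,t)) φ(x)) dx = 0. -/

import Mathlib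

open MeasureTheory Metric Set Filter Real
open scoped ENNReal RealInnerProductSpace

noncomputable section

/-- Euclidean space `ℝ^N`. -/
abbrev Euc (N : ℕ) : Type := EuclideanSpace ℝ (Fin N)

/-- The spatial Laplacian of a function on `ℝ^N`. -/
def lap {N : ℕ} (φ : Euc N → ℝ) (x : Euc N) : ℝ :=
  ∑ i : Fin N, fderiv ℝ (fderiv ℝ φ) x (EuclideanSpace.single i 1) (EuclideanSpace.single i 1)

/-- Smooth, compactly supported test functions on `ℝ^N`. -/
def IsTestFun {N : ℕ} (φ : Euc N → ℝ) : Prop :=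
  ContDiff ℝ (⊤ : ℕ∞) φ ∧ HasCompactSupport φ

/-- Smooth test functions compactly supported in `Q = ℝ^N × (0,∞)`. -/
def IsTestFunQ {N : ℕ} (φ : Euc N × ℝ → ℝ) : Prop :=
  ContDiff ℝ (⊤ : ℕ∞) φ ∧ HasCompactSupport φ ∧ tsupport φ ⊆ {q : Euc N × ℝ | 0 < q.2}

/-- The parabolic domain `Q = ℝ^N × (0,∞)`. -/
def Qset (N : ℕ) : Set (Euc N × ℝ) := Set.univ ×ˢ Set.Ioi (0 : ℝ)

/-- The hypotheses on the growth function `G`: it is `C¹`, strictly decreasing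
(negative derivative) on `[0,∞)`, and vanishes at the homeostatic pressure `p_M > 0`. -/
structure GCond (G : ℝ → ℝ) (pM : ℝ) : Prop where
  smooth : ContDiff ℝ 1 G
  deriv_neg : ∀ q : ℝ, 0 ≤ q → deriv G q < 0
  pM_pos : 0 < pM
  G_pM : G pM = 0

/-- A (stiff) limit solution `(n,p)` of `∂ₜ n = Δp + n G(p)` with initial datum `n0`,
with the pressure taken in its good (pointwise) representative, and `gp` the weak
spatial gradient of `p`. -/
structure LimitSolution (N : ℕ) (G : ℝ → ℝ) (pM : ℝ) (n0 : Euc N → ℝ)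
    (n p : Euc N → ℝ → ℝ) (gp : Euc N → ℝ → Euc N) : Prop where
  n0_int : Integrable n0
  n0_range : ∀ᵐ x : Euc N ∂volume, 0 ≤ n0 x ∧ n0 x ≤ 1
  n_meas : Measurable fun q : Euc N × ℝ => n q.1 q.2
  p_meas : Measurable fun q : Euc N × ℝ => p q.1 q.2
  gp_meas : Measurable fun q : Euc N × ℝ => gp q.1 q.2
  n_range : ∀ᵐ q : Euc N × ℝ ∂volume, 0 < q.2 → 0 ≤ n q.1 q.2 ∧ n q.1 q.2 ≤ 1
  p_range : ∀ (x : Euc N) (t : ℝ), 0 ≤ t → 0 ≤ p x t ∧ p x t ≤ pM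
  saturation : ∀ᵐ q : Euc N × ℝ ∂volume, 0 < q.2 → n q.1 q.2 < 1 → p q.1 q.2 = 0
  n_integrable : ∀ t : ℝ, 0 ≤ t → Integrable fun x => n x t
  n_L1cont : ∀ t₀ : ℝ, 0 ≤ t₀ →
    Tendsto (fun t => ∫ x, |n x t - n x t₀|) (nhdsWithin t₀ (Set.Ici 0)) (nhds 0)
  n_init : ∀ᵐ x : Euc N ∂volume, n x 0 = n0 x
  mass : ∀ t : ℝ, 0 ≤ t → ∫ x, n x t ≤ Real.exp (G 0 * t) * ∫ x, n0 x
  gp_sq_int : ∀ T : ℝ, 0 < T →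
    IntegrableOn (fun q : Euc N × ℝ => ‖gp q.1 q.2‖ ^ 2) (Set.univ ×ˢ Set.Ioc 0 T)
  gp_weak : ∀ φ : Euc N × ℝ → ℝ, IsTestFunQ φ → ∀ i : Fin N,
    ∫ q in Qset N, p q.1 q.2 * fderiv ℝ (fun y => φ (y, q.2)) q.1 (EuclideanSpace.single i 1)
      = - ∫ q in Qset N, gp q.1 q.2 i * φ q
  pde : ∀ φ : Euc N × ℝ → ℝ, IsTestFunQ φ →
    ∫ q in Qset N, (n q.1 q.2 * deriv (fun s => φ (q.1, s)) q.2
      + p q.1 q.2 * lap (fun y => φ (y, q.2)) q.1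
      + n q.1 q.2 * G (p q.1 q.2) * φ q) = 0
  p_time_mono_distrib : ∀ φ : Euc N × ℝ → ℝ, IsTestFunQ φ → (∀ q, 0 ≤ φ q) →
    ∫ q in Qset N, p q.1 q.2 * deriv (fun s => φ (q.1, s)) q.2 ≤ 0
  semiconvexity : ∀ φ : Euc N × ℝ → ℝ, IsTestFunQ φ → (∀ q, 0 ≤ φ q) →
    0 ≤ ∫ q in Qset N, (p q.1 q.2 * lap (fun y => φ (y, q.2)) q.1 + G (p q.1 q.2) * φ q)
  p_mono : ∀ x : Euc N, MonotoneOn (fun t => p x t) (Set.Ici 0)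
  p_right_cont : ∀ (x : Euc N) (t₀ : ℝ), 0 ≤ t₀ →
    Tendsto (fun t => p x t) (nhdsWithin t₀ (Set.Ioi t₀)) (nhds (p x t₀))
  p_usc : UpperSemicontinuousOn (fun q : Euc N × ℝ => p q.1 q.2) (Set.univ ×ˢ Set.Ici 0)
  p_mean : ∀ (x₀ : Euc N) (t₀ : ℝ), 0 ≤ t₀ →
    Tendsto (fun r : ℝ => ((volume (ball x₀ r)).toReal)⁻¹ *
        ∫ x in ball x₀ r, (r ^ 2)⁻¹ * ∫ s in Set.Ioc t₀ (t₀ + r ^ 2), p x s)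
      (nhdsWithin 0 (Set.Ioi 0)) (nhds (p x₀ t₀))

/-- The Baiocchi-type variable `w(x,t) = ∫₀ᵗ e^{-G(0)s} p(x,s) ds`. -/
def wFun {N : ℕ} (G : ℝ → ℝ) (p : Euc N → ℝ → ℝ) (x : Euc N) (t : ℝ) : ℝ :=
  ∫ s in (0:ℝ)..t, Real.exp (-(G 0) * s) * p x s

/-- The set `Ω(t) = {p(·,t) > 0}`. -/
def Omega {N : ℕ} (p : Euc N → ℝ → ℝ) (t : ℝ) : Set (Euc N) := {x | 0 < p x t}

/-- The set `Ω̃(t) = {w(·,t) > 0}`. -/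
def OmegaTilde {N : ℕ} (G : ℝ → ℝ) (p : Euc N → ℝ → ℝ) (t : ℝ) : Set (Euc N) :=
  {x | 0 < wFun G p x t}

/-- `F̃(x,t) = e^{-G(0)t} n(x,t) - n⁰(x) + ∫₀ᵗ e^{-G(0)s} n(x,s)(G(0) - G(p(x,s))) ds`. -/
def Ftilde {N : ℕ} (G : ℝ → ℝ) (n0 : Euc N → ℝ) (n p : Euc N → ℝ → ℝ)
    (x : Euc N) (t : ℝ) : ℝ :=
  Real.exp (-(G 0) * t) * n x t - n0 x
    + ∫ s in (0:ℝ)..t, Real.exp (-(G 0) * s) * n x s * (G 0 - G (p x s))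

/-- `F(x,t) = e^{-G(0)t} - n⁰(x) + ∫₀ᵗ e^{-G(0)s} (G(0) - G(p(x,s))) ds`. -/
def Ffun {N : ℕ} (G : ℝ → ℝ) (n0 : Euc N → ℝ) (p : Euc N → ℝ → ℝ)
    (x : Euc N) (t : ℝ) : ℝ :=
  Real.exp (-(G 0) * t) - n0 x
    + ∫ s in (0:ℝ)..t, Real.exp (-(G 0) * s) * (G 0 - G (p x s))


/-! ### Auxiliary lemmas -/

section Aux

open Function

-- bump existence
lemma exists_bump (t ε : ℝ) (hε : 0 < ε) :
    ∃ χ : ℝ → ℝ, ContDiff ℝ (⊤ : ℕ∞) χ ∧ HasCompactSupport χ ∧ (∀ s, 0 ≤ χ s) ∧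
      Function.support χ = Ioo t (t + ε) ∧ tsupport χ ⊆ Icc t (t + ε) ∧ (∫ s, χ s) = 1 := by
  have h1 : (0:ℝ) < ε / 4 := by linarith
  have h2 : ε / 4 < ε / 2 := by linarith
  set f : ContDiffBump (t + ε / 2) := ⟨ε / 4, ε / 2, h1, h2⟩
  refine ⟨f.normed volume, f.contDiff_normed, f.hasCompactSupport_normed, f.nonneg_normed,
    ?_, ?_, f.integral_normed⟩
  · rw [f.support_normed_eq]
    show ball (t + ε / 2) (ε / 2) = _
    rw [Real.ball_eq_Ioo]
    have e1 : t + ε / 2 - ε / 2 = t := by ring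
    have e2 : t + ε / 2 + ε / 2 = t + ε := by ring
    rw [e1, e2]
  · rw [f.tsupport_normed_eq]
    show closedBall (t + ε / 2) (ε / 2) ⊆ _
    rw [Real.closedBall_eq_Icc]
    apply Icc_subset_Icc <;> [linarith; linarith]

-- lap of product with const
lemma lap_mul_const {N : ℕ} {ψ : Euc N → ℝ} (hψ : ContDiff ℝ (⊤ : ℕ∞) ψ) (c : ℝ) (x : Euc N) :
    lap (fun y => ψ y * c) x = c * lap ψ x := by
  have hd : Differentiable ℝ ψ := hψ.differentiable (by simp)
  have hfd : Differentiable ℝ (fderiv ℝ ψ) :=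
    (hψ.fderiv_right (m := (⊤:ℕ∞)) (by exact_mod_cast le_rfl)).differentiable
      (by simp)
  have h1 : (fun y => ψ y * c) = fun y => c • ψ y := by
    funext y; simp [smul_eq_mul, mul_comm]
  have h2 : fderiv ℝ (fun y => ψ y * c) = fun y => c • fderiv ℝ ψ y := by
    funext y; rw [h1, fderiv_fun_const_smul (hd y) c]
  have h3 : fderiv ℝ (fderiv ℝ (fun y => ψ y * c)) x = c • fderiv ℝ (fderiv ℝ ψ) x := by
    rw [h2, fderiv_fun_const_smul (hfd x) c]
  simp only [lap, h3, ContinuousLinearMap.smul_apply, smul_eq_mul, Finset.mul_sum]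

lemma lap_continuous {N : ℕ} {ψ : Euc N → ℝ} (hψ : ContDiff ℝ (⊤ : ℕ∞) ψ) :
    Continuous (lap ψ) := by
  have : Continuous (fderiv ℝ (fderiv ℝ ψ)) :=
    (((hψ.fderiv_right (m := (⊤:ℕ∞)) (by exact_mod_cast le_rfl))).fderiv_right (m := (⊤:ℕ∞))
      (by exact_mod_cast le_rfl)).continuous
  exact continuous_finset_sum _ fun i _ =>
    (this.clm_apply continuous_const).clm_apply continuous_const

lemma lap_hasCompactSupport {N : ℕ} {ψ : Euc N → ℝ} (hψ : HasCompactSupport ψ) :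
    HasCompactSupport (lap ψ) := by
  have h2 : HasCompactSupport (fderiv ℝ (fderiv ℝ ψ)) := (hψ.fderiv ℝ).fderiv ℝ
  exact h2.comp_left (g := fun L : Euc N →L[ℝ] (Euc N →L[ℝ] ℝ) =>
    ∑ i : Fin N, L (EuclideanSpace.single i 1) (EuclideanSpace.single i 1)) (by simp)

lemma lap_eq_zero_of_nmem {N : ℕ} {ψ : Euc N → ℝ} {x : Euc N} (hx : x ∉ tsupport ψ) :
    lap ψ x = 0 := by
  have h1 : x ∉ tsupport (fderiv ℝ (fderiv ℝ ψ)) :=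
    fun h => hx (tsupport_fderiv_subset ℝ (tsupport_fderiv_subset ℝ h))
  have h2 : fderiv ℝ (fderiv ℝ ψ) x = 0 := image_eq_zero_of_notMem_tsupport h1
  simp [lap, h2]

-- generic integrability
lemma integrable_of_bdd_supp {α : Type*} [MeasurableSpace α] {μ : Measure α} {f : α → ℝ}
    (hf : AEStronglyMeasurable f μ) {K : Set α} (hKm : MeasurableSet K) (hKfin : μ K ≠ ∞)
    (h0 : ∀ x ∉ K, f x = 0) {C : ℝ} (hC : ∀ x, |f x| ≤ C) : Integrable f μ := by
  have hfi : f = K.indicator f := by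
    funext x; by_cases h : x ∈ K
    · simp [h]
    · simp [h, h0 x h]
  rw [hfi, integrable_indicator_iff hKm]
  exact Measure.integrableOn_of_bounded hKfin hf
    (ae_of_all _ fun x => by simpa [Real.norm_eq_abs] using hC x)

-- Fubini on Qset
lemma qset_integral {N : ℕ} (f : Euc N × ℝ → ℝ)
    (hf : Integrable f (volume : Measure (Euc N × ℝ))) :
    ∫ q in Qset N, f q = ∫ x : Euc N, ∫ s in Ioi (0:ℝ), f (x, s) := by
  have hμ : (volume : Measure (Euc N × ℝ)).restrict (Qset N)
      = (volume : Measure (Euc N)).prod (volume.restrict (Ioi (0:ℝ))) := by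
    rw [Measure.volume_eq_prod, Qset, ← Measure.prod_restrict, Measure.restrict_univ]
  rw [show (∫ q in Qset N, f q) = ∫ q, f q
      ∂((volume : Measure (Euc N)).prod (volume.restrict (Ioi (0:ℝ)))) from by rw [← hμ]]
  have hfi : Integrable f ((volume : Measure (Euc N)).prod (volume.restrict (Ioi (0:ℝ)))) := by
    rw [← hμ]; exact hf.restrict
  exact MeasureTheory.integral_prod f hfi

-- Lipschitz bound for G on [0, pM]
lemma G_lipschitz {G : ℝ → ℝ} (hG : ContDiff ℝ 1 G) (pM : ℝ) (hpM : 0 < pM) :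
    ∃ L : ℝ, 0 ≤ L ∧ (∀ a ∈ Icc (0:ℝ) pM, ∀ b ∈ Icc (0:ℝ) pM, |G a - G b| ≤ L * |a - b|) := by
  obtain ⟨L, hL⟩ := (isCompact_Icc (a := (0:ℝ)) (b := pM)).exists_bound_of_continuousOn
    ((hG.continuous_deriv le_rfl).continuousOn)
  refine ⟨max L 0, le_max_right _ _, fun a ha b hb => ?_⟩
  have key := (convex_Icc (0:ℝ) pM).norm_image_sub_le_of_norm_fderivWithin_le
    (f := G) (C := max L 0) (hG.differentiable one_ne_zero).differentiableOn ?_ hb ha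
  · simpa [Real.norm_eq_abs] using key
  · intro x hx
    have hu : UniqueDiffOn ℝ (Icc (0:ℝ) pM) := uniqueDiffOn_Icc hpM
    rw [fderivWithin_eq_fderiv (hu x hx) ((hG.differentiable one_ne_zero) x)]
    have h1 : ‖fderiv ℝ G x‖ = ‖deriv G x‖ := by
      rw [← toSpanSingleton_deriv]
      simp
    rw [h1, Real.norm_eq_abs]
    calc |deriv G x| ≤ L := by simpa [Real.norm_eq_abs] using hL x hx
      _ ≤ max L 0 := le_max_left _ _

-- integral over Ioi 0 of compactly supported function and of its derivative
lemma integral_Ioi_eq_integral {f : ℝ → ℝ} {t ε : ℝ} (ht : 0 < t)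
    (hsupp : Function.support f ⊆ Icc t (t + ε)) :
    ∫ s in Ioi (0:ℝ), f s = ∫ s, f s := by
  apply setIntegral_eq_integral_of_forall_compl_eq_zero
  intro s hs
  by_contra h
  have := hsupp h
  exact hs (lt_of_lt_of_le ht this.1)

lemma integral_Ioi_deriv_eq_zero {χ : ℝ → ℝ} {t ε : ℝ} (ht : 0 < t) (hε : 0 < ε)
    (hχs : ContDiff ℝ (⊤ : ℕ∞) χ) (hsupp : tsupport χ ⊆ Icc t (t + ε)) :
    ∫ s in Ioi (0:ℝ), deriv χ s = 0 := by
  have hds : Function.support (deriv χ) ⊆ Icc t (t + ε) :=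
    fun s hs => hsupp (support_deriv_subset hs)
  rw [integral_Ioi_eq_integral ht hds]
  have hd : Differentiable ℝ χ := hχs.differentiable (by simp)
  have hdc : Continuous (deriv χ) := hχs.continuous_deriv (by exact_mod_cast le_top)
  have hab : (t - 1 : ℝ) ≤ t + ε + 1 := by linarith
  have h1 : ∫ s, deriv χ s = ∫ s in Set.Ioc (t-1) (t+ε+1), deriv χ s := by
    symm
    apply setIntegral_eq_integral_of_forall_compl_eq_zero
    intro s hs
    by_contra h
    have := hds h
    simp only [mem_Ioc, not_and_or, not_lt, not_le] at hs
    rcases hs with h' | h' <;> [linarith [this.1]; linarith [this.2]]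
  rw [h1, ← intervalIntegral.integral_of_le hab,
    intervalIntegral.integral_deriv_eq_sub (fun x _ => hd x)
      (hdc.intervalIntegrable _ _)]
  have hz : ∀ u : ℝ, u ∉ Icc t (t + ε) → χ u = 0 := by
    intro u hu
    by_contra h
    exact hu (hsupp (subset_tsupport χ h))
  rw [hz _ (by simp only [mem_Icc]; push_neg; intro h; linarith), hz _ (by simp only [mem_Icc]; push_neg; intro h; linarith), sub_zero]

-- slice integrability
lemma slice_integrable {f χ : ℝ → ℝ}
    (hf : AEStronglyMeasurable f (volume.restrict (Ioi (0:ℝ))))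
    (hχ : Continuous χ) {a b C M : ℝ} (ha : 0 < a)
    (hsupp : Function.support χ ⊆ Icc a b)
    (hC : ∀ s, 0 < s → |f s| ≤ C) (hM : ∀ s, |χ s| ≤ M) :
    IntegrableOn (fun s => f s * χ s) (Ioi (0:ℝ)) := by
  apply integrable_of_bdd_supp (μ := volume.restrict (Ioi 0))
    (hf.mul (hχ.aestronglyMeasurable.restrict)) (measurableSet_Icc (a := a) (b := b))
    (C := max (C * M) 0)
  · exact ne_of_lt (lt_of_le_of_lt (Measure.restrict_apply_le _ _) measure_Icc_lt_top)
  · intro s hs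
    have : χ s = 0 := by
      by_contra h
      exact hs (hsupp h)
    simp [this]
  · intro s
    by_cases h : χ s = 0
    · simp [h]
    · have hsmem : s ∈ Icc a b := hsupp h
      have hs0 : 0 < s := lt_of_lt_of_le ha hsmem.1
      have hC0 : 0 ≤ C := le_trans (abs_nonneg _) (hC s hs0)
      calc |f s * χ s| = |f s| * |χ s| := abs_mul _ _
        _ ≤ C * M := mul_le_mul (hC s hs0) (hM s) (abs_nonneg _) hC0
        _ ≤ max (C * M) 0 := le_max_left _ _

end Aux


section Core

variable {N : ℕ}

/-- Construction of the space-time test function `ψ ⊗ χ`. -/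
lemma testQ_of_prod {ψ : Euc N → ℝ} {χ : ℝ → ℝ} {t ε : ℝ} (ht : 0 < t)
    (hψs : ContDiff ℝ (⊤ : ℕ∞) ψ) (hψc : HasCompactSupport ψ)
    (hχs : ContDiff ℝ (⊤ : ℕ∞) χ) (hχc : HasCompactSupport χ)
    (hχsupp : tsupport χ ⊆ Icc t (t + ε)) :
    IsTestFunQ (fun q : Euc N × ℝ => ψ q.1 * χ q.2) := by
  have hsub : tsupport (fun q : Euc N × ℝ => ψ q.1 * χ q.2) ⊆ tsupport ψ ×ˢ tsupport χ := by
    have h1 : Function.support (fun q : Euc N × ℝ => ψ q.1 * χ q.2)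
        ⊆ tsupport ψ ×ˢ tsupport χ := by
      intro q hq
      have h2 : ψ q.1 ≠ 0 ∧ χ q.2 ≠ 0 := by
        constructor <;> intro h <;> simp [Function.mem_support, h] at hq
      exact ⟨subset_tsupport _ h2.1, subset_tsupport _ h2.2⟩
    exact closure_minimal h1 ((hψc.isCompact.prod hχc.isCompact).isClosed)
  refine ⟨(hψs.comp contDiff_fst).mul (hχs.comp contDiff_snd), ?_, ?_⟩
  · exact HasCompactSupport.intro (hψc.isCompact.prod hχc.isCompact)
      fun q hq => by
        by_contra h
        exact hq (hsub (subset_tsupport _ h))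
  · intro q hq
    have h3 := hχsupp (hsub hq).2
    exact lt_of_lt_of_le ht h3.1

/-- The key convergence lemma: integrating the elliptic expression against a sequence of
temporal bumps concentrating at `t⁺` converges to the value at time `t`. -/
lemma core_tendsto (G : ℝ → ℝ) (hGc : Continuous G) (pM : ℝ) (hpM : 0 < pM)
    (L CG : ℝ) (hL0 : 0 ≤ L)
    (hLip : ∀ a ∈ Icc (0:ℝ) pM, ∀ b ∈ Icc (0:ℝ) pM, |G a - G b| ≤ L * |a - b|)
    (hCG : ∀ u ∈ Icc (0:ℝ) pM, |G u| ≤ CG)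
    (p : Euc N → ℝ → ℝ)
    (hp : Measurable fun q : Euc N × ℝ => p q.1 q.2)
    (hpr : ∀ (x : Euc N) (s : ℝ), 0 ≤ s → 0 ≤ p x s ∧ p x s ≤ pM)
    (hmono : ∀ x : Euc N, MonotoneOn (fun s => p x s) (Ici (0:ℝ)))
    (t : ℝ) (ht : 0 < t)
    (hrc : ∀ x : Euc N, Tendsto (fun s => p x s) (nhdsWithin t (Ioi t)) (nhds (p x t)))
    (ψ : Euc N → ℝ) (hψs : ContDiff ℝ (⊤:ℕ∞) ψ) (hψc : HasCompactSupport ψ)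
    (χ : ℕ → ℝ → ℝ)
    (hχs : ∀ n, ContDiff ℝ (⊤:ℕ∞) (χ n)) (hχc : ∀ n, HasCompactSupport (χ n))
    (hχ0 : ∀ n s, 0 ≤ χ n s)
    (hχsupp : ∀ n, Function.support (χ n) = Ioo t (t + 1/(n+1:ℝ)))
    (hχint : ∀ n, ∫ s in Ioi (0:ℝ), χ n s = 1) :
    Tendsto (fun n => ∫ x, ∫ s in Ioi (0:ℝ),
        (p x s * (χ n s * lap ψ x) + G (p x s) * (ψ x * χ n s)))
      atTop (nhds (∫ x, (p x t * lap ψ x + G (p x t) * ψ x))) := by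
  classical
  set ε : ℕ → ℝ := fun n => 1/(n+1:ℝ) with hεdef
  have hεpos : ∀ n, 0 < ε n := fun n => by positivity
  have hMex : ∀ n, ∃ M, ∀ s, |χ n s| ≤ M := by
    intro n
    obtain ⟨M, hM⟩ := (hχc n).exists_bound_of_continuous (hχs n).continuous
    exact ⟨M, fun s => by simpa [Real.norm_eq_abs] using hM s⟩
  choose M hM using hMex
  have hxm : ∀ x : Euc N, Measurable (fun s => p x s) := fun x =>
    hp.comp (measurable_const.prodMk measurable_id)
  have hxaesm : ∀ x : Euc N,
      AEStronglyMeasurable (fun s => p x s) (volume.restrict (Ioi (0:ℝ))) := fun x =>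
    (hxm x).aestronglyMeasurable
  have hpb : ∀ (x : Euc N) (s : ℝ), 0 < s → |p x s| ≤ pM := fun x s hs => by
    rw [abs_of_nonneg (hpr x s hs.le).1]; exact (hpr x s hs.le).2
  have hpmem : ∀ (x : Euc N) (s : ℝ), 0 ≤ s → p x s ∈ Icc (0:ℝ) pM := fun x s hs =>
    ⟨(hpr x s hs).1, (hpr x s hs).2⟩
  have hCG0 : 0 ≤ CG := le_trans (abs_nonneg _) (hCG (p 0 t) (hpmem 0 t ht.le))
  have hGpb : ∀ (x : Euc N) (s : ℝ), 0 < s → |G (p x s)| ≤ CG := fun x s hs =>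
    hCG _ (hpmem x s hs.le)
  have hsuppIcc : ∀ n, Function.support (χ n) ⊆ Icc t (t + ε n) := fun n => by
    rw [hχsupp n]; exact Ioo_subset_Icc_self
  have hmem : ∀ n s, χ n s ≠ 0 → s ∈ Ioo t (t + ε n) := fun n s h => by
    have h2 : s ∈ Function.support (χ n) := h
    rwa [hχsupp n] at h2
  -- slice integrability
  have int1 : ∀ n (x : Euc N), IntegrableOn (fun s => p x s * χ n s) (Ioi (0:ℝ)) := fun n x =>
    slice_integrable (hxaesm x) (hχs n).continuous ht (hsuppIcc n) (hpb x) (hM n)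
  have int2 : ∀ n (x : Euc N), IntegrableOn (fun s => G (p x s) * χ n s) (Ioi (0:ℝ)) :=
    fun n x => slice_integrable ((hGc.measurable.comp (hxm x)).aestronglyMeasurable)
      (hχs n).continuous ht (hsuppIcc n) (hGpb x) (hM n)
  have intχ : ∀ n, IntegrableOn (χ n) (Ioi (0:ℝ)) := fun n =>
    ((hχs n).continuous.integrable_of_hasCompactSupport (hχc n)).integrableOn
  have intcχ : ∀ n (c : ℝ), IntegrableOn (fun s => c * χ n s) (Ioi (0:ℝ)) := fun n c =>
    (intχ n).const_mul c
  have hconst : ∀ n (c : ℝ), ∫ s in Ioi (0:ℝ), c * χ n s = c := by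
    intro n c
    rw [MeasureTheory.integral_const_mul, hχint n, mul_one]
  -- the inner integral splits
  have hF_eq : ∀ n (x : Euc N),
      (∫ s in Ioi (0:ℝ), (p x s * (χ n s * lap ψ x) + G (p x s) * (ψ x * χ n s)))
        = lap ψ x * (∫ s in Ioi (0:ℝ), p x s * χ n s)
          + ψ x * (∫ s in Ioi (0:ℝ), G (p x s) * χ n s) := by
    intro n x
    have h1 : (∫ s in Ioi (0:ℝ), (p x s * (χ n s * lap ψ x) + G (p x s) * (ψ x * χ n s)))
        = ∫ s in Ioi (0:ℝ), ((p x s * χ n s) * lap ψ x + (G (p x s) * χ n s) * ψ x) :=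
      integral_congr_ae (ae_of_all _ fun s => by ring)
    rw [h1, integral_add ((int1 n x).mul_const _) ((int2 n x).mul_const _),
      integral_mul_const, integral_mul_const]
    ring
  -- bounds for A
  have hA0 : ∀ n (x : Euc N), 0 ≤ ∫ s in Ioi (0:ℝ), p x s * χ n s := fun n x =>
    setIntegral_nonneg measurableSet_Ioi fun s hs =>
      mul_nonneg (hpr x s (le_of_lt hs)).1 (hχ0 n s)
  have hApM : ∀ n (x : Euc N), (∫ s in Ioi (0:ℝ), p x s * χ n s) ≤ pM := by
    intro n x
    calc (∫ s in Ioi (0:ℝ), p x s * χ n s) ≤ ∫ s in Ioi (0:ℝ), pM * χ n s :=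
          setIntegral_mono_on (int1 n x) (intcχ n pM) measurableSet_Ioi
            (fun s hs => mul_le_mul_of_nonneg_right (hpr x s (le_of_lt hs)).2 (hχ0 n s))
      _ = pM := hconst n pM
  have hA_lb : ∀ n (x : Euc N), p x t ≤ ∫ s in Ioi (0:ℝ), p x s * χ n s := by
    intro n x
    calc p x t = ∫ s in Ioi (0:ℝ), p x t * χ n s := (hconst n _).symm
      _ ≤ ∫ s in Ioi (0:ℝ), p x s * χ n s := by
          apply setIntegral_mono_on (intcχ n _) (int1 n x) measurableSet_Ioi
          intro s _
          by_cases h : χ n s = 0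
          · simp [h]
          · have hm := hmem n s h
            have h1 : p x t ≤ p x s := hmono x (mem_Ici.mpr ht.le)
              (mem_Ici.mpr (lt_trans ht hm.1).le) hm.1.le
            exact mul_le_mul_of_nonneg_right h1 (hχ0 n s)
  have hA_ub : ∀ n (x : Euc N),
      (∫ s in Ioi (0:ℝ), p x s * χ n s) ≤ p x (t + ε n) := by
    intro n x
    calc (∫ s in Ioi (0:ℝ), p x s * χ n s) ≤ ∫ s in Ioi (0:ℝ), p x (t + ε n) * χ n s := by
          apply setIntegral_mono_on (int1 n x) (intcχ n _) measurableSet_Ioi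
          intro s _
          by_cases h : χ n s = 0
          · simp [h]
          · have hm := hmem n s h
            have h1 : p x s ≤ p x (t + ε n) := hmono x
              (mem_Ici.mpr (lt_trans ht hm.1).le)
              (mem_Ici.mpr (by have := hεpos n; linarith)) hm.2.le
            exact mul_le_mul_of_nonneg_right h1 (hχ0 n s)
      _ = p x (t + ε n) := hconst n _
  -- bound for B (deviation)
  have hB_bound : ∀ n (x : Euc N),
      |(∫ s in Ioi (0:ℝ), G (p x s) * χ n s) - G (p x t)|
        ≤ L * (p x (t + ε n) - p x t) := by
    intro n x
    have hint_diff : IntegrableOn (fun s => (G (p x s) - G (p x t)) * χ n s) (Ioi (0:ℝ)) := by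
      apply ((int2 n x).sub (intcχ n (G (p x t)))).congr
      exact ae_of_all _ fun s => by simp only [Pi.sub_apply]; ring
    have e2 : (∫ s in Ioi (0:ℝ), G (p x s) * χ n s) - G (p x t)
        = ∫ s in Ioi (0:ℝ), (G (p x s) - G (p x t)) * χ n s := by
      rw [← hconst n (G (p x t)), ← integral_sub (int2 n x) (intcχ n _)]
      rw [hconst n (G (p x t))]
      apply integral_congr_ae (ae_of_all _ fun s => by ring)
    rw [e2]
    calc |∫ s in Ioi (0:ℝ), (G (p x s) - G (p x t)) * χ n s|
        ≤ ∫ s in Ioi (0:ℝ), |(G (p x s) - G (p x t)) * χ n s| := by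
          have hni := norm_integral_le_integral_norm (μ := volume.restrict (Ioi (0:ℝ)))
              (f := fun s => (G (p x s) - G (p x t)) * χ n s)
          simp only [Real.norm_eq_abs] at hni
          exact hni
      _ ≤ ∫ s in Ioi (0:ℝ), (L * (p x (t + ε n) - p x t)) * χ n s := by
          apply setIntegral_mono_on hint_diff.abs (intcχ n _) measurableSet_Ioi
          intro s hs
          by_cases h : χ n s = 0
          · simp [h]
          · have hm := hmem n s h
            have hs0 : (0:ℝ) < s := lt_trans ht hm.1
            have hmono1 : p x t ≤ p x s := hmono x (mem_Ici.mpr ht.le)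
              (mem_Ici.mpr hs0.le) hm.1.le
            have hmono2 : p x s ≤ p x (t + ε n) := hmono x (mem_Ici.mpr hs0.le)
              (mem_Ici.mpr (by have := hεpos n; linarith)) hm.2.le
            rw [abs_mul, abs_of_nonneg (hχ0 n s)]
            apply mul_le_mul_of_nonneg_right _ (hχ0 n s)
            calc |G (p x s) - G (p x t)| ≤ L * |p x s - p x t| :=
                  hLip _ (hpmem x s hs0.le) _ (hpmem x t ht.le)
              _ ≤ L * (p x (t + ε n) - p x t) := by
                  apply mul_le_mul_of_nonneg_left _ hL0
                  rw [abs_of_nonneg (sub_nonneg.mpr hmono1)]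
                  exact sub_le_sub_right hmono2 _
      _ = L * (p x (t + ε n) - p x t) := hconst n _
  -- bound for B (absolute)
  have hBabs : ∀ n (x : Euc N), |∫ s in Ioi (0:ℝ), G (p x s) * χ n s| ≤ CG := by
    intro n x
    calc |∫ s in Ioi (0:ℝ), G (p x s) * χ n s|
        ≤ ∫ s in Ioi (0:ℝ), |G (p x s) * χ n s| := by
          have hni := norm_integral_le_integral_norm (μ := volume.restrict (Ioi (0:ℝ)))
              (f := fun s => G (p x s) * χ n s)
          simp only [Real.norm_eq_abs] at hni
          exact hni
      _ ≤ ∫ s in Ioi (0:ℝ), CG * χ n s := by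
          apply setIntegral_mono_on (int2 n x).abs (intcχ n _) measurableSet_Ioi
          intro s hs
          rw [abs_mul, abs_of_nonneg (hχ0 n s)]
          exact mul_le_mul_of_nonneg_right (hGpb x s hs) (hχ0 n s)
      _ = CG := hconst n _
  -- the monotone limit from the right
  have hDt : ∀ x : Euc N, Tendsto (fun n => p x (t + ε n)) atTop (nhds (p x t)) := by
    intro x
    have h1 : Tendsto (fun n : ℕ => t + ε n) atTop (nhdsWithin t (Ioi t)) := by
      apply tendsto_nhdsWithin_of_tendsto_nhds_of_eventually_within
      · have h2 : Tendsto (fun n : ℕ => (1:ℝ)/(n+1)) atTop (nhds 0) :=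
          tendsto_one_div_add_atTop_nhds_zero_nat
        have h3 : Tendsto (fun n : ℕ => t + ε n) atTop (nhds (t + 0)) :=
          (tendsto_const_nhds (x := t)).add h2
        simpa using h3
      · filter_upwards with n
        exact mem_Ioi.mpr (by have := hεpos n; linarith)
    exact (hrc x).comp h1
  -- convergence of A
  have hAconv : ∀ x : Euc N,
      Tendsto (fun n => ∫ s in Ioi (0:ℝ), p x s * χ n s) atTop (nhds (p x t)) := fun x =>
    tendsto_of_tendsto_of_tendsto_of_le_of_le tendsto_const_nhds (hDt x)
      (fun n => hA_lb n x) (fun n => hA_ub n x)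
  -- convergence of B
  have hBconv : ∀ x : Euc N,
      Tendsto (fun n => ∫ s in Ioi (0:ℝ), G (p x s) * χ n s) atTop
        (nhds (G (p x t))) := by
    intro x
    have h0 : Tendsto (fun n => (∫ s in Ioi (0:ℝ), G (p x s) * χ n s) - G (p x t))
        atTop (nhds 0) := by
      apply squeeze_zero_norm (a := fun n => L * (p x (t + ε n) - p x t))
      · intro n; simpa [Real.norm_eq_abs] using hB_bound n x
      · have h2 : Tendsto (fun n => p x (t + ε n) - p x t) atTop (nhds 0) := by
          simpa using (hDt x).sub (tendsto_const_nhds (x := p x t))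
        simpa using h2.const_mul L
    have h3 := h0.add (tendsto_const_nhds (x := G (p x t)))
    simpa using h3
  -- measurability of the approximants
  have hFnm : ∀ n, AEStronglyMeasurable (fun x : Euc N => ∫ s in Ioi (0:ℝ),
      (p x s * (χ n s * lap ψ x) + G (p x s) * (ψ x * χ n s))) volume := by
    intro n
    have m1 : Measurable (fun q : Euc N × ℝ =>
        p q.1 q.2 * (χ n q.2 * lap ψ q.1) + G (p q.1 q.2) * (ψ q.1 * χ n q.2)) := by
      apply Measurable.add
      · exact hp.mul (((hχs n).continuous.measurable.comp measurable_snd).mul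
          ((lap_continuous hψs).measurable.comp measurable_fst))
      · exact (hGc.measurable.comp hp).mul
          ((hψs.continuous.measurable.comp measurable_fst).mul
            (((hχs n).continuous.measurable.comp measurable_snd)))
    exact (m1.stronglyMeasurable.integral_prod_right').aestronglyMeasurable
  -- dominated convergence
  apply tendsto_integral_of_dominated_convergence
    (bound := fun x => pM * |lap ψ x| + CG * |ψ x|) hFnm
  · have i1 : Integrable (fun x : Euc N => pM * |lap ψ x|) := by
      apply Continuous.integrable_of_hasCompactSupport
        (continuous_const.mul (lap_continuous hψs).abs)
      exact (lap_hasCompactSupport hψc).comp_left (g := fun u : ℝ => pM * |u|) (by simp)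
    have i2 : Integrable (fun x : Euc N => CG * |ψ x|) := by
      apply Continuous.integrable_of_hasCompactSupport
        (continuous_const.mul hψs.continuous.abs)
      exact hψc.comp_left (g := fun u : ℝ => CG * |u|) (by simp)
    exact i1.add i2
  · intro n
    apply ae_of_all
    intro x
    rw [Real.norm_eq_abs, hF_eq n x]
    have hAabs : |∫ s in Ioi (0:ℝ), p x s * χ n s| ≤ pM := by
      rw [abs_of_nonneg (hA0 n x)]; exact hApM n x
    calc |lap ψ x * (∫ s in Ioi (0:ℝ), p x s * χ n s)
          + ψ x * (∫ s in Ioi (0:ℝ), G (p x s) * χ n s)|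
        ≤ |lap ψ x| * |∫ s in Ioi (0:ℝ), p x s * χ n s|
          + |ψ x| * |∫ s in Ioi (0:ℝ), G (p x s) * χ n s| := by
          rw [← abs_mul, ← abs_mul]; exact abs_add_le _ _
      _ ≤ |lap ψ x| * pM + |ψ x| * CG :=
          add_le_add (mul_le_mul_of_nonneg_left hAabs (abs_nonneg _))
            (mul_le_mul_of_nonneg_left (hBabs n x) (abs_nonneg _))
      _ = pM * |lap ψ x| + CG * |ψ x| := by ring
  · apply ae_of_all
    intro x
    have h1 : Tendsto (fun n => lap ψ x * (∫ s in Ioi (0:ℝ), p x s * χ n s)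
        + ψ x * (∫ s in Ioi (0:ℝ), G (p x s) * χ n s)) atTop
        (nhds (lap ψ x * p x t + ψ x * G (p x t))) :=
      (tendsto_const_nhds.mul (hAconv x)).add (tendsto_const_nhds.mul (hBconv x))
    have h2 : p x t * lap ψ x + G (p x t) * ψ x
        = lap ψ x * p x t + ψ x * G (p x t) := by ring
    rw [h2]
    have heq : (fun n => ∫ s in Ioi (0:ℝ),
        (p x s * (χ n s * lap ψ x) + G (p x s) * (ψ x * χ n s)))
        = fun n => lap ψ x * (∫ s in Ioi (0:ℝ), p x s * χ n s)
          + ψ x * (∫ s in Ioi (0:ℝ), G (p x s) * χ n s) := funext fun n => hF_eq n x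
    rw [heq]
    exact h1

end Core

/-- **Corollary 2.3.** For every `t > 0`, `Δp(t) + G(p(t)) ≥ 0` in `D'(ℝ^N)` and
`Δp(t) + G(p(t)) = 0` in `D'(Int Ω(t))`. -/
theorem distributional_elliptic_equation {N : ℕ} (hN : 1 ≤ N) (G : ℝ → ℝ) (pM : ℝ)
    (hG : GCond G pM) (n0 : Euc N → ℝ) (n p : Euc N → ℝ → ℝ) (gp : Euc N → ℝ → Euc N)
    (hsol : LimitSolution N G pM n0 n p gp) (t : ℝ) (ht : 0 < t) :
    (∀ φ : Euc N → ℝ, IsTestFun φ → (∀ x, 0 ≤ φ x) →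
      0 ≤ ∫ x, (p x t * lap φ x + G (p x t) * φ x)) ∧
    (∀ φ : Euc N → ℝ, IsTestFun φ → tsupport φ ⊆ interior (Omega p t) →
      ∫ x, (p x t * lap φ x + G (p x t) * φ x) = 0) := by
  classical
  obtain ⟨L, hL0, hLip⟩ := G_lipschitz hG.smooth pM hG.pM_pos
  set CG : ℝ := |G 0| + L * pM with hCGdef
  have hCG : ∀ u ∈ Icc (0:ℝ) pM, |G u| ≤ CG := by
    intro u hu
    have h1 : |G u - G 0| ≤ L * |u - 0| := hLip u hu 0 ⟨le_rfl, hG.pM_pos.le⟩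
    have h2 : |u - 0| ≤ pM := by
      rw [sub_zero, abs_of_nonneg hu.1]; exact hu.2
    have h3 : L * |u - 0| ≤ L * pM := mul_le_mul_of_nonneg_left h2 hL0
    calc |G u| = |G 0 + (G u - G 0)| := by ring_nf
      _ ≤ |G 0| + |G u - G 0| := abs_add_le _ _
      _ ≤ |G 0| + L * pM := by linarith
  have hCG0 : 0 ≤ CG := add_nonneg (abs_nonneg _) (mul_nonneg hL0 hG.pM_pos.le)
  have hGc : Continuous G := hG.smooth.continuous
  -- the sequence of temporal bumps
  have hbump := fun nn : ℕ => exists_bump t (1/(nn+1:ℝ)) (by positivity)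
  choose χ hχ1 hχ2 hχ3 hχ4 hχ5 hχ6 using hbump
  have hχint : ∀ nn, ∫ s in Ioi (0:ℝ), χ nn s = 1 := fun nn => by
    rw [integral_Ioi_eq_integral ht (by rw [hχ4 nn]; exact Ioo_subset_Icc_self)]
    exact hχ6 nn
  have hpb : ∀ (x : Euc N) (s : ℝ), 0 < s → |p x s| ≤ pM := fun x s hs => by
    rw [abs_of_nonneg (hsol.p_range x s hs.le).1]; exact (hsol.p_range x s hs.le).2
  have hGpb : ∀ (x : Euc N) (s : ℝ), 0 < s → |G (p x s)| ≤ CG := fun x s hs =>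
    hCG _ ⟨(hsol.p_range x s hs.le).1, (hsol.p_range x s hs.le).2⟩
  -- the main convergence statement, for an arbitrary spatial test function
  have big : ∀ ψ : Euc N → ℝ, IsTestFun ψ →
      (∀ nn : ℕ, Integrable (fun q : Euc N × ℝ =>
        p q.1 q.2 * (χ nn q.2 * lap ψ q.1) + G (p q.1 q.2) * (ψ q.1 * χ nn q.2))
        (volume : Measure (Euc N × ℝ))) ∧
      Tendsto (fun nn => ∫ q in Qset N, (p q.1 q.2 * (χ nn q.2 * lap ψ q.1)
          + G (p q.1 q.2) * (ψ q.1 * χ nn q.2)))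
        atTop (nhds (∫ x, (p x t * lap ψ x + G (p x t) * ψ x))) := by
    intro ψ hψ
    have hint : ∀ nn : ℕ, Integrable (fun q : Euc N × ℝ =>
        p q.1 q.2 * (χ nn q.2 * lap ψ q.1) + G (p q.1 q.2) * (ψ q.1 * χ nn q.2))
        (volume : Measure (Euc N × ℝ)) := by
      intro nn
      obtain ⟨Mχ, hMχ⟩ := (hχ2 nn).exists_bound_of_continuous (hχ1 nn).continuous
      obtain ⟨Mψ, hMψ⟩ := hψ.2.exists_bound_of_continuous hψ.1.continuous
      obtain ⟨Ml, hMl⟩ := (lap_hasCompactSupport hψ.2).exists_bound_of_continuous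
        (lap_continuous hψ.1)
      simp only [Real.norm_eq_abs] at hMχ hMψ hMl
      have hMχ0 : 0 ≤ Mχ := le_trans (abs_nonneg _) (hMχ 0)
      have hMψ0 : 0 ≤ Mψ := le_trans (abs_nonneg _) (hMψ 0)
      have hMl0 : 0 ≤ Ml := le_trans (abs_nonneg _) (hMl 0)
      have hm1 : Measurable (fun q : Euc N × ℝ =>
          p q.1 q.2 * (χ nn q.2 * lap ψ q.1) + G (p q.1 q.2) * (ψ q.1 * χ nn q.2)) := by
        apply Measurable.add
        · exact hsol.p_meas.mul (((hχ1 nn).continuous.measurable.comp measurable_snd).mul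
            ((lap_continuous hψ.1).measurable.comp measurable_fst))
        · exact (hGc.measurable.comp hsol.p_meas).mul
            ((hψ.1.continuous.measurable.comp measurable_fst).mul
              (((hχ1 nn).continuous.measurable.comp measurable_snd)))
      apply integrable_of_bdd_supp hm1.aestronglyMeasurable
        (K := tsupport ψ ×ˢ Icc t (t + 1/(nn+1:ℝ)))
        ((isClosed_tsupport ψ).measurableSet.prod measurableSet_Icc)
        (C := max (pM * (Mχ * Ml) + CG * (Mψ * Mχ)) 0)
      · rw [Measure.volume_eq_prod, Measure.prod_prod]
        exact (ENNReal.mul_lt_top hψ.2.isCompact.measure_lt_top measure_Icc_lt_top).ne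
      · intro q hq
        by_cases h1 : q.1 ∈ tsupport ψ
        · have h2 : q.2 ∉ Icc t (t + 1/(nn+1:ℝ)) := fun h => hq ⟨h1, h⟩
          have h3 : χ nn q.2 = 0 := by
            by_contra h
            have h4 : q.2 ∈ Function.support (χ nn) := h
            rw [hχ4 nn] at h4
            exact h2 (Ioo_subset_Icc_self h4)
          simp [h3]
        · have h3 := image_eq_zero_of_notMem_tsupport h1
          have h4 := lap_eq_zero_of_nmem h1
          simp [h3, h4]
      · intro q
        by_cases h : χ nn q.2 = 0
        · simp only [h, mul_zero, zero_mul, mul_zero, add_zero, abs_zero]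
          exact le_max_right _ 0
        · have h4 : q.2 ∈ Ioo t (t + 1/(nn+1:ℝ)) := by
            have h5 : q.2 ∈ Function.support (χ nn) := h
            rwa [hχ4 nn] at h5
          have hq2 : 0 < q.2 := lt_trans ht h4.1
          have e1 : |p q.1 q.2 * (χ nn q.2 * lap ψ q.1)| ≤ pM * (Mχ * Ml) := by
            rw [abs_mul, abs_mul]
            exact mul_le_mul (hpb q.1 q.2 hq2)
              (mul_le_mul (hMχ q.2) (hMl q.1) (abs_nonneg _) hMχ0)
              (mul_nonneg (abs_nonneg _) (abs_nonneg _)) hG.pM_pos.le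
          have e2 : |G (p q.1 q.2) * (ψ q.1 * χ nn q.2)| ≤ CG * (Mψ * Mχ) := by
            rw [abs_mul, abs_mul]
            exact mul_le_mul (hGpb q.1 q.2 hq2)
              (mul_le_mul (hMψ q.1) (hMχ q.2) (abs_nonneg _) hMψ0)
              (mul_nonneg (abs_nonneg _) (abs_nonneg _)) hCG0
          calc |p q.1 q.2 * (χ nn q.2 * lap ψ q.1) + G (p q.1 q.2) * (ψ q.1 * χ nn q.2)|
              ≤ |p q.1 q.2 * (χ nn q.2 * lap ψ q.1)|
                + |G (p q.1 q.2) * (ψ q.1 * χ nn q.2)| := abs_add_le _ _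
            _ ≤ pM * (Mχ * Ml) + CG * (Mψ * Mχ) := add_le_add e1 e2
            _ ≤ max (pM * (Mχ * Ml) + CG * (Mψ * Mχ)) 0 := le_max_left _ _
    refine ⟨hint, ?_⟩
    have heq : (fun nn => ∫ q in Qset N, (p q.1 q.2 * (χ nn q.2 * lap ψ q.1)
        + G (p q.1 q.2) * (ψ q.1 * χ nn q.2)))
        = fun nn => ∫ x, ∫ s in Ioi (0:ℝ),
            (p x s * (χ nn s * lap ψ x) + G (p x s) * (ψ x * χ nn s)) :=
      funext fun nn => qset_integral _ (hint nn)
    rw [heq]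
    exact core_tendsto G hGc pM hG.pM_pos L CG hL0 hLip hCG p hsol.p_meas
      (fun x s hs => hsol.p_range x s hs) hsol.p_mono t ht
      (fun x => hsol.p_right_cont x t ht.le) ψ hψ.1 hψ.2 χ hχ1 hχ2 hχ3 hχ4 hχint
  constructor
  · -- part (i)
    intro ψ hψ hψ0
    obtain ⟨hint, hlim⟩ := big ψ hψ
    apply ge_of_tendsto' hlim
    intro nn
    have htest : IsTestFunQ (fun q : Euc N × ℝ => ψ q.1 * χ nn q.2) :=
      testQ_of_prod ht hψ.1 hψ.2 (hχ1 nn) (hχ2 nn) (hχ5 nn)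
    have hsc : 0 ≤ ∫ q in Qset N, (p q.1 q.2 * lap (fun y => ψ y * χ nn q.2) q.1
        + G (p q.1 q.2) * (ψ q.1 * χ nn q.2)) := by
      simpa only [] using
        hsol.semiconvexity _ htest (fun q => mul_nonneg (hψ0 q.1) (hχ3 nn q.2))
    have heq2 : ∫ q in Qset N, (p q.1 q.2 * lap (fun y => ψ y * χ nn q.2) q.1
        + G (p q.1 q.2) * (ψ q.1 * χ nn q.2))
        = ∫ q in Qset N, (p q.1 q.2 * (χ nn q.2 * lap ψ q.1)
          + G (p q.1 q.2) * (ψ q.1 * χ nn q.2)) :=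
      integral_congr_ae (ae_of_all _ fun q => by beta_reduce; rw [lap_mul_const hψ.1])
    exact le_of_le_of_eq hsc heq2
  · -- part (ii)
    intro ψ hψ hsub
    obtain ⟨hint, hlim⟩ := big ψ hψ
    have hzero : ∀ nn : ℕ, (∫ q in Qset N, (p q.1 q.2 * (χ nn q.2 * lap ψ q.1)
        + G (p q.1 q.2) * (ψ q.1 * χ nn q.2))) = 0 := by
      intro nn
      have htest : IsTestFunQ (fun q : Euc N × ℝ => ψ q.1 * χ nn q.2) :=
        testQ_of_prod ht hψ.1 hψ.2 (hχ1 nn) (hχ2 nn) (hχ5 nn)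
      have hχd : Differentiable ℝ (χ nn) := (hχ1 nn).differentiable (by simp)
      have hpde : (∫ q in Qset N, (n q.1 q.2 * deriv (fun s => ψ q.1 * χ nn s) q.2
          + p q.1 q.2 * lap (fun y => ψ y * χ nn q.2) q.1
          + n q.1 q.2 * G (p q.1 q.2) * (ψ q.1 * χ nn q.2))) = 0 := by
        simpa only [] using hsol.pde _ htest
      -- a.e. rewriting of the integrand using saturation
      have hcongr : (fun q : Euc N × ℝ => n q.1 q.2 * deriv (fun s => ψ q.1 * χ nn s) q.2
          + p q.1 q.2 * lap (fun y => ψ y * χ nn q.2) q.1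
          + n q.1 q.2 * G (p q.1 q.2) * (ψ q.1 * χ nn q.2))
          =ᵐ[volume.restrict (Qset N)]
          (fun q : Euc N × ℝ => ψ q.1 * deriv (χ nn) q.2
            + (p q.1 q.2 * (χ nn q.2 * lap ψ q.1)
              + G (p q.1 q.2) * (ψ q.1 * χ nn q.2))) := by
        filter_upwards [ae_restrict_of_ae hsol.saturation, ae_restrict_of_ae hsol.n_range]
          with q hsat hrange
        have hd : deriv (fun s => ψ q.1 * χ nn s) q.2 = ψ q.1 * deriv (χ nn) q.2 :=
          deriv_const_mul _ (hχd q.2)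
        have hl : lap (fun y => ψ y * χ nn q.2) q.1 = χ nn q.2 * lap ψ q.1 :=
          lap_mul_const hψ.1 _ _
        rw [hd, hl]
        by_cases hx : q.1 ∈ tsupport ψ
        · by_cases hs : q.2 ∈ Icc t (t + 1/(nn+1:ℝ))
          · have hppos : 0 < p q.1 q.2 := by
              have h1 : q.1 ∈ Omega p t := interior_subset (hsub hx)
              have h2 : 0 < p q.1 t := h1
              have h3 : p q.1 t ≤ p q.1 q.2 := hsol.p_mono q.1 (mem_Ici.mpr ht.le)
                (mem_Ici.mpr (le_trans ht.le hs.1)) hs.1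
              linarith
            have hq2 : 0 < q.2 := lt_of_lt_of_le ht hs.1
            have hn1 : n q.1 q.2 = 1 := by
              by_contra h
              have hlt : n q.1 q.2 < 1 := lt_of_le_of_ne (hrange hq2).2 h
              have h4 := hsat hq2 hlt
              rw [h4] at hppos
              exact lt_irrefl _ hppos
            rw [hn1]; ring
          · have h1 : χ nn q.2 = 0 := by
              by_contra h
              have h5 : q.2 ∈ Function.support (χ nn) := h
              rw [hχ4 nn] at h5
              exact hs (Ioo_subset_Icc_self h5)
            have h2 : deriv (χ nn) q.2 = 0 := by
              by_contra h
              have h5 : q.2 ∈ Function.support (deriv (χ nn)) := h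
              exact hs (hχ5 nn (support_deriv_subset h5))
            rw [h1, h2]; ring
        · have h1 : ψ q.1 = 0 := image_eq_zero_of_notMem_tsupport hx
          rw [h1]; ring
      -- integrability of the time-derivative part
      have hintT1 : Integrable (fun q : Euc N × ℝ => ψ q.1 * deriv (χ nn) q.2)
          (volume : Measure (Euc N × ℝ)) := by
        obtain ⟨Mχ', hMχ'⟩ := (hχ2 nn).deriv.exists_bound_of_continuous
          ((hχ1 nn).continuous_deriv (by exact_mod_cast le_top))
        obtain ⟨Mψ, hMψ⟩ := hψ.2.exists_bound_of_continuous hψ.1.continuous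
        simp only [Real.norm_eq_abs] at hMχ' hMψ
        have hMψ0 : 0 ≤ Mψ := le_trans (abs_nonneg _) (hMψ 0)
        have hm1 : Measurable (fun q : Euc N × ℝ => ψ q.1 * deriv (χ nn) q.2) :=
          (hψ.1.continuous.measurable.comp measurable_fst).mul
            ((((hχ1 nn).continuous_deriv (by exact_mod_cast le_top)).measurable).comp
              measurable_snd)
        apply integrable_of_bdd_supp hm1.aestronglyMeasurable
          (K := tsupport ψ ×ˢ Icc t (t + 1/(nn+1:ℝ)))
          ((isClosed_tsupport ψ).measurableSet.prod measurableSet_Icc)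
          (C := Mψ * Mχ')
        · rw [Measure.volume_eq_prod, Measure.prod_prod]
          exact (ENNReal.mul_lt_top hψ.2.isCompact.measure_lt_top measure_Icc_lt_top).ne
        · intro q hq
          by_cases h1 : q.1 ∈ tsupport ψ
          · have h2 : q.2 ∉ Icc t (t + 1/(nn+1:ℝ)) := fun h => hq ⟨h1, h⟩
            have h3 : deriv (χ nn) q.2 = 0 := by
              by_contra h
              have h5 : q.2 ∈ Function.support (deriv (χ nn)) := h
              exact h2 (hχ5 nn (support_deriv_subset h5))
            simp [h3]
          · simp [image_eq_zero_of_notMem_tsupport h1]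
        · intro q
          rw [abs_mul]
          exact mul_le_mul (hMψ q.1) (hMχ' q.2) (abs_nonneg _) hMψ0
      -- compute : the time-derivative part integrates to zero
      have hT1zero : (∫ q in Qset N, ψ q.1 * deriv (χ nn) q.2) = 0 := by
        rw [qset_integral _ hintT1]
        have h1 : ∀ x : Euc N, (∫ s in Ioi (0:ℝ), ψ x * deriv (χ nn) s) = 0 := by
          intro x
          rw [MeasureTheory.integral_const_mul,
            integral_Ioi_deriv_eq_zero ht (by positivity) (hχ1 nn) (hχ5 nn), mul_zero]
        simp only [h1, integral_zero]
      -- put everything together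
      have hsplit : (∫ q in Qset N, (ψ q.1 * deriv (χ nn) q.2
          + (p q.1 q.2 * (χ nn q.2 * lap ψ q.1) + G (p q.1 q.2) * (ψ q.1 * χ nn q.2))))
          = (∫ q in Qset N, ψ q.1 * deriv (χ nn) q.2)
            + ∫ q in Qset N, (p q.1 q.2 * (χ nn q.2 * lap ψ q.1)
              + G (p q.1 q.2) * (ψ q.1 * χ nn q.2)) :=
        integral_add hintT1.restrict (hint nn).restrict
      have hfinal : (0:ℝ) = 0 + ∫ q in Qset N, (p q.1 q.2 * (χ nn q.2 * lap ψ q.1)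
          + G (p q.1 q.2) * (ψ q.1 * χ nn q.2)) := by
        calc (0:ℝ) = ∫ q in Qset N, (n q.1 q.2 * deriv (fun s => ψ q.1 * χ nn s) q.2
            + p q.1 q.2 * lap (fun y => ψ y * χ nn q.2) q.1
            + n q.1 q.2 * G (p q.1 q.2) * (ψ q.1 * χ nn q.2)) := hpde.symm
          _ = ∫ q in Qset N, (ψ q.1 * deriv (χ nn) q.2
              + (p q.1 q.2 * (χ nn q.2 * lap ψ q.1)
                + G (p q.1 q.2) * (ψ q.1 * χ nn q.2))) := integral_congr_ae hcongr
          _ = 0 + ∫ q in Qset N, (p q.1 q.2 * (χ nn q.2 * lap ψ q.1)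
              + G (p q.1 q.2) * (ψ q.1 * χ nn q.2)) := by rw [hsplit, hT1zero]
      linarith [hfinal]
    have hlim0 : Tendsto (fun _ : ℕ => (0:ℝ)) atTop
        (nhds (∫ x, (p x t * lap ψ x + G (p x t) * ψ x))) := by
      have h1 : (fun nn => ∫ q in Qset N, (p q.1 q.2 * (χ nn q.2 * lap ψ q.1)
          + G (p q.1 q.2) * (ψ q.1 * χ nn q.2))) = fun _ : ℕ => (0:ℝ) :=
        funext fun nn => hzero nn
      rwa [h1] at hlim
    exact (tendsto_nhds_unique tendsto_const_nhds hlim0).symm
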